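/- Let K be a Galois number field of degree k ≥ 3 with incomplete norm form f, and suppose μ_n is a function on integral ideals of O_K satisfying 1_{n | N𝔮} = Σ_𝔫 μ_n(𝔫)·1_{𝔫 | 𝔮} for all nonzero integral ideals 𝔮. Then for every positive integer n, ϱ(n)/n = Σ_𝔫 μ_n(𝔫)·ρ(𝔫)/N𝔫. -/

import Mathlib

open NumberField Classical

noncomputable section

section Aux

/-- Splitting of `ZMod m` along the cast map to `ZMod d`. -/
def zmodSplitAux (m d : ℕ) [NeZero d] (hd : d ∣ m) :
    ZMod m ≃ ZMod d × {z : ZMod m // ZMod.castHom hd (ZMod d) z = 0} where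
  toFun z := ⟨ZMod.castHom hd (ZMod d) z,
    ⟨z - ((ZMod.castHom hd (ZMod d) z).val : ZMod m), by
      simp [map_sub, map_natCast, ZMod.natCast_val, ZMod.cast_id]⟩⟩
  invFun p := ((p.1.val : ZMod m)) + p.2.1
  left_inv z := by simp
  right_inv p := by
    rcases p with ⟨y, z, hz⟩
    have h1 : ZMod.castHom hd (ZMod d) ((y.val : ZMod m) + z) = y := by
      simp [map_add, hz, map_natCast, ZMod.natCast_val, ZMod.cast_id]
    simp only [ZMod.castHom_apply, ZMod.natCast_val] at h1
    ext
    · simpa [ZMod.natCast_val] using h1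
    · simp [ZMod.natCast_val, h1]

lemma zmod_ker_card_aux (m d : ℕ) [NeZero m] [NeZero d] (hd : d ∣ m) :
    Nat.card {z : ZMod m // ZMod.castHom hd (ZMod d) z = 0} = m / d := by
  have h := Nat.card_congr (zmodSplitAux m d hd)
  simp only [Nat.card_prod, Nat.card_zmod] at h
  have hd0 : 0 < d := Nat.pos_of_ne_zero (NeZero.ne d)
  exact (Nat.div_eq_of_eq_mul_left hd0 (h.trans (mul_comm _ _))).symm

lemma count_pullback_aux (r m d : ℕ) [NeZero m] [NeZero d] (hd : d ∣ m)
    (P : (Fin r → ZMod d) → Prop) :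
    Nat.card {x : Fin r → ZMod m // P (fun i => ZMod.castHom hd (ZMod d) (x i))}
      = (m / d) ^ r * Nat.card {y : Fin r → ZMod d // P y} := by
  let e1 : (Fin r → ZMod m)
      ≃ (Fin r → ZMod d) × (Fin r → {z : ZMod m // ZMod.castHom hd (ZMod d) z = 0}) :=
    (Equiv.piCongrRight fun _ => zmodSplitAux m d hd).trans (Equiv.arrowProdEquivProdArrow _ _ _)
  have e2 : {x : Fin r → ZMod m // P (fun i => ZMod.castHom hd (ZMod d) (x i))}
      ≃ {p : _ × _ // P p.1} := e1.subtypeEquiv (fun x => by rfl)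
  have hcard := Nat.card_congr (e2.trans Equiv.prodSubtypeFstEquivSubtypeProd)
  rw [hcard, Nat.card_prod, Nat.card_fun, zmod_ker_card_aux m d hd,
    Nat.card_eq_fintype_card (α := Fin r), Fintype.card_fin, mul_comm]

end Aux

/-- The incomplete norm form f(x) = N(x₁ω₁ + … + x_{k-1}ω_{k-1}). -/
def incNormForm (K : Type) [Field K] [NumberField K] (k : ℕ)
    (ω : Module.Basis (Fin k) ℤ (𝓞 K)) (x : Fin (k-1) → ℤ) : ℤ :=
  Algebra.norm ℤ (∑ i : Fin (k-1), x i • ω (Fin.castLE (Nat.sub_le k 1) i))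

section Aux2

variable (K : Type) [Field K] [NumberField K] (k : ℕ) (ω : Module.Basis (Fin k) ℤ (𝓞 K))

/-- The linear part x₁ω₁ + … + x_{k-1}ω_{k-1}. -/
def alphaForm (z : Fin (k-1) → ℤ) : 𝓞 K :=
  ∑ i : Fin (k-1), z i • ω (Fin.castLE (Nat.sub_le k 1) i)

lemma incNormForm_eq (z : Fin (k-1) → ℤ) :
    incNormForm K k ω z = Algebra.norm ℤ (alphaForm K k ω z) := rfl

lemma incNormForm_congr (n : ℕ) (x y : Fin (k-1) → ℤ)
    (h : ∀ i, ((x i : ZMod n)) = (y i : ZMod n)) :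
    ((incNormForm K k ω x : ℤ) : ZMod n) = ((incNormForm K k ω y : ℤ) : ZMod n) := by
  have key : ∀ z : Fin (k-1) → ℤ,
      ((incNormForm K k ω z : ℤ) : ZMod n)
      = (∑ i : Fin (k-1), (z i : ZMod n) •
          ((Int.castRingHom (ZMod n)).mapMatrix
            (Algebra.leftMulMatrix ω (ω (Fin.castLE (Nat.sub_le k 1) i))))).det := by
    intro z
    rw [incNormForm, Algebra.norm_eq_matrix_det ω]
    refine (RingHom.map_det (Int.castRingHom (ZMod n)) _).trans ?_
    congr 1
    rw [map_sum, map_sum]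
    refine Finset.sum_congr rfl fun i _ => ?_
    rw [map_zsmul, map_zsmul, ← Int.cast_smul_eq_zsmul (ZMod n)]
  rw [key, key]
  congr 1
  exact Finset.sum_congr rfl fun i _ => by rw [h i]

lemma incNormForm_dvd_congr (n : ℕ) (x y : Fin (k-1) → ℤ)
    (h : ∀ i, ((x i : ZMod n)) = (y i : ZMod n)) :
    (n : ℤ) ∣ incNormForm K k ω x ↔ (n : ℤ) ∣ incNormForm K k ω y := by
  rw [← ZMod.intCast_zmod_eq_zero_iff_dvd, ← ZMod.intCast_zmod_eq_zero_iff_dvd,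
    incNormForm_congr K k ω n x y h]

lemma mem_ideal_congr (𝔫 : Ideal (𝓞 K)) (x y : Fin (k-1) → ℤ)
    (h : ∀ i, ((x i : ZMod (Ideal.absNorm 𝔫)) = (y i : ZMod (Ideal.absNorm 𝔫)))) :
    alphaForm K k ω x ∈ 𝔫 ↔ alphaForm K k ω y ∈ 𝔫 := by
  have hsub : alphaForm K k ω x - alphaForm K k ω y ∈ 𝔫 := by
    rw [alphaForm, alphaForm, ← Finset.sum_sub_distrib]
    refine Submodule.sum_mem _ fun i _ => ?_
    rw [← sub_smul]
    obtain ⟨c, hc⟩ : ((Ideal.absNorm 𝔫 : ℤ)) ∣ (x i - y i) := by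
      rw [← ZMod.intCast_zmod_eq_zero_iff_dvd]
      push_cast
      rw [h i, sub_self]
    rw [hc, mul_smul, zsmul_eq_mul]
    push_cast
    exact Ideal.mul_mem_right _ _ (Ideal.absNorm_mem 𝔫)
  constructor
  · intro hx
    simpa using Submodule.sub_mem _ hx hsub
  · intro hy
    simpa using Submodule.add_mem _ hy hsub

end Aux2

/-- ϱ(n) = n^{-(k-2)} #{x mod n : n ∣ f(x)}. -/
def varrho (K : Type) [Field K] [NumberField K] (k : ℕ)
    (ω : Module.Basis (Fin k) ℤ (𝓞 K)) (n : ℕ) : ℝ :=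
  (Nat.card {x : Fin (k-1) → ZMod n //
      (n : ℤ) ∣ incNormForm K k ω (fun i => ((x i).val : ℤ))} : ℝ) / (n : ℝ) ^ (k - 2)

/-- ρ(𝔫) = (N𝔫)^{-(k-2)} #{x mod N𝔫 : 𝔫 ∣ (x)}. -/
def rhoIdeal (K : Type) [Field K] [NumberField K] (k : ℕ)
    (ω : Module.Basis (Fin k) ℤ (𝓞 K)) (𝔫 : Ideal (𝓞 K)) : ℝ :=
  (Nat.card {x : Fin (k-1) → ZMod (Ideal.absNorm 𝔫) //
      (∑ i : Fin (k-1), ((x i).val : ℤ) • ω (Fin.castLE (Nat.sub_le k 1) i)) ∈ 𝔫} : ℝ)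
    / (Ideal.absNorm 𝔫 : ℝ) ^ (k - 2)

/-- ϱ(n)/n = Σ_𝔫 μ_n(𝔫) ρ(𝔫)/N𝔫. -/
theorem varrho_eq_sum_moebius_rho
    (K : Type) [Field K] [NumberField K] [IsGalois ℚ K] (k : ℕ) (hk : 3 ≤ k)
    (hdeg : Module.finrank ℚ K = k)
    (ω : Module.Basis (Fin k) ℤ (𝓞 K)) (hω1 : ω ⟨0, by omega⟩ = 1)
    (n : ℕ) (hn : 0 < n)
    (μ : Ideal (𝓞 K) → ℤ) (hμfin : (Function.support μ).Finite)
    (hμ : ∀ 𝔮 : Ideal (𝓞 K), 𝔮 ≠ 0 →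
      ((if n ∣ Ideal.absNorm 𝔮 then (1 : ℝ) else 0)
        = ∑' 𝔫 : Ideal (𝓞 K), (μ 𝔫 : ℝ) * (if 𝔫 ∣ 𝔮 then 1 else 0))) :
    varrho K k ω n / n
      = ∑' 𝔫 : Ideal (𝓞 K), (μ 𝔫 : ℝ) * rhoIdeal K k ω 𝔫 / (Ideal.absNorm 𝔫 : ℝ) := by
  classical
  set S : Finset (Ideal (𝓞 K)) := hμfin.toFinset with hS
  set S' : Finset (Ideal (𝓞 K)) := S.filter (fun 𝔫 => 𝔫 ≠ 0) with hS'
  have hmemS : ∀ 𝔫, 𝔫 ∈ S ↔ μ 𝔫 ≠ 0 := fun 𝔫 => hμfin.mem_toFinset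
  have hμzero : ∀ 𝔫, 𝔫 ∉ S → μ 𝔫 = 0 :=
    fun 𝔫 h => not_not.mp (fun hne => h ((hmemS 𝔫).mpr hne))
  have hNne : ∀ 𝔫 ∈ S', Ideal.absNorm 𝔫 ≠ 0 := by
    intro 𝔫 h𝔫
    have h0 : 𝔫 ≠ 0 := (Finset.mem_filter.mp h𝔫).2
    simpa [Ideal.absNorm_eq_zero_iff] using h0
  have hsub : S' ⊆ S := Finset.filter_subset _ _
  set M : ℕ := n * ∏ 𝔫 ∈ S', Ideal.absNorm 𝔫 with hMdef
  have hM : 0 < M :=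
    Nat.mul_pos hn (Finset.prod_pos fun 𝔫 h => Nat.pos_of_ne_zero (hNne 𝔫 h))
  haveI : NeZero M := ⟨hM.ne'⟩
  haveI : NeZero n := ⟨hn.ne'⟩
  have hdn : n ∣ M := dvd_mul_right _ _
  have hdN : ∀ 𝔫 ∈ S', Ideal.absNorm 𝔫 ∣ M :=
    fun 𝔫 h => dvd_mul_of_dvd_right (Finset.dvd_prod_of_mem _ h) n
  have hkr : k - 2 + 1 = k - 1 := by omega
  -- the lift of a vector mod M to ℤ
  have hn0R : (n : ℝ) ≠ 0 := Nat.cast_ne_zero.mpr hn.ne'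
  have hM0R : (M : ℝ) ≠ 0 := Nat.cast_ne_zero.mpr hM.ne'
  -- ∑_{𝔫 ∈ S'} μ 𝔫 = 1
  have hsum1 : (1 : ℝ) = ∑ 𝔫 ∈ S', (μ 𝔫 : ℝ) := by
    set 𝔮₀ : Ideal (𝓞 K) := Ideal.span {(n : 𝓞 K)} * ∏ 𝔫 ∈ S', 𝔫 with h𝔮₀
    have h𝔮₀ne : 𝔮₀ ≠ 0 := by
      refine mul_ne_zero ?_ ?_
      · rw [Ne, Ideal.zero_eq_bot, Ideal.span_singleton_eq_bot]
        exact_mod_cast hn.ne'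
      · rw [Finset.prod_ne_zero_iff]
        exact fun 𝔫 h => (Finset.mem_filter.mp h).2
    have hdvd : n ∣ Ideal.absNorm 𝔮₀ := by
      rw [h𝔮₀, map_mul]
      refine Dvd.dvd.mul_right ?_ _
      rw [Ideal.absNorm_span_singleton]
      have hcast : (n : 𝓞 K) = algebraMap ℤ (𝓞 K) (n : ℤ) := by push_cast; rfl
      rw [hcast, Algebra.norm_algebraMap_of_basis ω, Fintype.card_fin]
      have hnn : ((n : ℤ) ^ k).natAbs = n ^ k := by
        rw [Int.natAbs_pow, Int.natAbs_natCast]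
      rw [hnn]
      exact dvd_pow_self _ (by omega)
    have h1 := hμ 𝔮₀ h𝔮₀ne
    rw [if_pos hdvd, tsum_eq_sum (s := S) (fun 𝔫 h𝔫 => by simp [hμzero 𝔫 h𝔫])] at h1
    refine h1.trans ((Finset.sum_subset hsub ?van).symm.trans ?_)
    case van =>
      intro 𝔫 hmem hnot
      have h0 : 𝔫 = 0 := by
        by_contra hne
        exact hnot (Finset.mem_filter.mpr ⟨hmem, hne⟩)
      rw [h0, if_neg (fun hdd => h𝔮₀ne (zero_dvd_iff.mp hdd)), mul_zero]
    refine Finset.sum_congr rfl fun 𝔫 h𝔫 => ?_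
    have : 𝔫 ∣ 𝔮₀ :=
      Dvd.dvd.mul_left (Finset.dvd_prod_of_mem _ h𝔫) _
    rw [if_pos this, mul_one]
  -- congruence of coordinates under the cast maps
  have hcoord : ∀ (d : ℕ), d ≠ 0 → ∀ (hd : d ∣ M) (x : Fin (k-1) → ZMod M) (i : Fin (k-1)),
      ((((x i).val : ℤ) : ZMod d))
        = ((((ZMod.castHom hd (ZMod d)) (x i)).val : ℤ) : ZMod d) := by
    intro d hdz hd x i
    haveI : NeZero d := ⟨hdz⟩
    push_cast
    simp [ZMod.natCast_val, ZMod.castHom_apply, ZMod.cast_id]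
  -- pointwise identity
  have hpt : ∀ x : Fin (k-1) → ZMod M,
      (if (n : ℤ) ∣ incNormForm K k ω (fun i => ((x i).val : ℤ)) then (1:ℝ) else 0)
        = ∑ 𝔫 ∈ S', (μ 𝔫 : ℝ) *
            (if alphaForm K k ω (fun i => ((x i).val : ℤ)) ∈ 𝔫 then 1 else 0) := by
    intro x
    by_cases hzero : alphaForm K k ω (fun i => ((x i).val : ℤ)) = 0
    · rw [if_pos (by rw [incNormForm_eq, hzero, Algebra.norm_zero]; exact dvd_zero _)]
      rw [Finset.sum_congr rfl (fun 𝔫 h => by rw [if_pos (hzero ▸ 𝔫.zero_mem), mul_one])]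
      exact hsum1
    · set 𝔮 : Ideal (𝓞 K) := Ideal.span {alphaForm K k ω (fun i => ((x i).val : ℤ))} with h𝔮
      have h𝔮ne : 𝔮 ≠ 0 := by
        rw [h𝔮, Ne, Ideal.zero_eq_bot, Ideal.span_singleton_eq_bot]
        exact hzero
      have h1 := hμ 𝔮 h𝔮ne
      rw [tsum_eq_sum (s := S) (fun 𝔫 h𝔫 => by simp [hμzero 𝔫 h𝔫])] at h1
      have hLHS : (n ∣ Ideal.absNorm 𝔮)
          ↔ (n : ℤ) ∣ incNormForm K k ω (fun i => ((x i).val : ℤ)) := by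
        rw [h𝔮, Ideal.absNorm_span_singleton, ← incNormForm_eq]
        exact Int.natCast_dvd_natCast.symm.trans Int.dvd_natAbs
      simp only [hLHS] at h1
      refine h1.trans ((Finset.sum_subset hsub ?van2).symm.trans ?_)
      case van2 =>
        intro 𝔫 hmem hnot
        have h0 : 𝔫 = 0 := by
          by_contra hne
          exact hnot (Finset.mem_filter.mpr ⟨hmem, hne⟩)
        rw [h0, if_neg (fun hdd => h𝔮ne (zero_dvd_iff.mp hdd)), mul_zero]
      refine Finset.sum_congr rfl fun 𝔫 h𝔫 => ?_
      congr 1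
      refine if_congr ?_ rfl rfl
      rw [h𝔮, Ideal.dvd_iff_le, Ideal.span_singleton_le_iff_mem]
  -- counting: the number of solutions mod M in terms of the number mod n
  have hcountL : Nat.card {x : Fin (k-1) → ZMod M //
        (n : ℤ) ∣ incNormForm K k ω (fun i => ((x i).val : ℤ))}
      = (M / n) ^ (k-1) * Nat.card {y : Fin (k-1) → ZMod n //
        (n : ℤ) ∣ incNormForm K k ω (fun i => ((y i).val : ℤ))} := by
    rw [Nat.card_congr (Equiv.subtypeEquivRight (q := fun x : Fin (k-1) → ZMod M =>
      (n : ℤ) ∣ incNormForm K k ω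
        (fun i => (((ZMod.castHom hdn (ZMod n)) (x i)).val : ℤ)))
      (fun x => incNormForm_dvd_congr K k ω n _ _ (hcoord n hn.ne' hdn x)))]
    exact count_pullback_aux (k-1) M n hdn
      (fun y => (n : ℤ) ∣ incNormForm K k ω (fun i => ((y i).val : ℤ)))
  have hcountR : ∀ 𝔫 ∈ S', Nat.card {x : Fin (k-1) → ZMod M //
        alphaForm K k ω (fun i => ((x i).val : ℤ)) ∈ 𝔫}
      = (M / Ideal.absNorm 𝔫) ^ (k-1) * Nat.card {y : Fin (k-1) → ZMod (Ideal.absNorm 𝔫) //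
        alphaForm K k ω (fun i => ((y i).val : ℤ)) ∈ 𝔫} := by
    intro 𝔫 h𝔫
    haveI : NeZero (Ideal.absNorm 𝔫) := ⟨hNne 𝔫 h𝔫⟩
    rw [Nat.card_congr (Equiv.subtypeEquivRight (q := fun x : Fin (k-1) → ZMod M =>
      alphaForm K k ω
        (fun i => (((ZMod.castHom (hdN 𝔫 h𝔫) (ZMod (Ideal.absNorm 𝔫))) (x i)).val : ℤ)) ∈ 𝔫)
      (fun x => mem_ideal_congr K k ω 𝔫 _ _ (hcoord _ (hNne 𝔫 h𝔫) (hdN 𝔫 h𝔫) x)))]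
    exact count_pullback_aux (k-1) M (Ideal.absNorm 𝔫) (hdN 𝔫 h𝔫)
      (fun y => alphaForm K k ω (fun i => ((y i).val : ℤ)) ∈ 𝔫)
  -- sums of indicators equal cardinalities
  have hsumL : ∑ x : Fin (k-1) → ZMod M,
      (if (n : ℤ) ∣ incNormForm K k ω (fun i => ((x i).val : ℤ)) then (1:ℝ) else 0)
      = (Nat.card {x : Fin (k-1) → ZMod M //
          (n : ℤ) ∣ incNormForm K k ω (fun i => ((x i).val : ℤ))} : ℝ) := by
    rw [Finset.sum_boole, Nat.card_eq_fintype_card, Fintype.card_subtype]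
  have hsumR : ∀ 𝔫 : Ideal (𝓞 K), ∑ x : Fin (k-1) → ZMod M,
      (if alphaForm K k ω (fun i => ((x i).val : ℤ)) ∈ 𝔫 then (1:ℝ) else 0)
      = (Nat.card {x : Fin (k-1) → ZMod M //
          alphaForm K k ω (fun i => ((x i).val : ℤ)) ∈ 𝔫} : ℝ) := by
    intro 𝔫
    rw [Finset.sum_boole, Nat.card_eq_fintype_card, Fintype.card_subtype]
  -- the master counting identity
  have hmain : (Nat.card {x : Fin (k-1) → ZMod M //
        (n : ℤ) ∣ incNormForm K k ω (fun i => ((x i).val : ℤ))} : ℝ)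
      = ∑ 𝔫 ∈ S', (μ 𝔫 : ℝ) * (Nat.card {x : Fin (k-1) → ZMod M //
          alphaForm K k ω (fun i => ((x i).val : ℤ)) ∈ 𝔫} : ℝ) := by
    rw [← hsumL, Finset.sum_congr rfl (fun x _ => hpt x), Finset.sum_comm]
    refine Finset.sum_congr rfl fun 𝔫 h𝔫 => ?_
    rw [← Finset.mul_sum, hsumR 𝔫]
  -- convert the tsum on the RHS of the goal to a finite sum over S'
  rw [tsum_eq_sum (s := S) (fun 𝔫 h𝔫 => by simp [hμzero 𝔫 h𝔫]),
    ← Finset.sum_subset hsub ?van3]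
  case van3 =>
    intro 𝔫 hmem hnot
    have h0 : 𝔫 = 0 := by
      by_contra hne
      exact hnot (Finset.mem_filter.mpr ⟨hmem, hne⟩)
    rw [h0]
    simp
  -- final arithmetic
  have key : ∀ (A : ℕ) (d : ℕ), d ∣ M → (d : ℝ) ≠ 0 →
      ∀ (C : ℕ), C = (M / d) ^ (k-1) * A → (A : ℝ) / (d : ℝ) ^ (k-1) = (C : ℝ) / (M : ℝ) ^ (k-1) := by
    intro A d hdvd hd0 C hC
    have h1 : ((C : ℝ)) = ((M : ℝ) / (d : ℝ)) ^ (k-1) * A := by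
      rw [hC]
      push_cast [Nat.cast_div hdvd hd0]
      ring
    rw [h1, div_pow]
    field_simp
  have hL : varrho K k ω n / (n : ℝ)
      = (Nat.card {x : Fin (k-1) → ZMod M //
          (n : ℤ) ∣ incNormForm K k ω (fun i => ((x i).val : ℤ))} : ℝ) / (M : ℝ) ^ (k-1) := by
    rw [varrho, div_div, ← pow_succ, hkr]
    exact key _ n hdn hn0R _ hcountL
  have hR : ∀ 𝔫 ∈ S', (μ 𝔫 : ℝ) * rhoIdeal K k ω 𝔫 / (Ideal.absNorm 𝔫 : ℝ)
      = (μ 𝔫 : ℝ) * ((Nat.card {x : Fin (k-1) → ZMod M //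
          alphaForm K k ω (fun i => ((x i).val : ℤ)) ∈ 𝔫} : ℝ) / (M : ℝ) ^ (k-1)) := by
    intro 𝔫 h𝔫
    have hB : rhoIdeal K k ω 𝔫 / (Ideal.absNorm 𝔫 : ℝ)
        = (Nat.card {y : Fin (k-1) → ZMod (Ideal.absNorm 𝔫) //
            alphaForm K k ω (fun i => ((y i).val : ℤ)) ∈ 𝔫} : ℝ) / (Ideal.absNorm 𝔫 : ℝ) ^ (k-1) := by
      rw [rhoIdeal, div_div, ← pow_succ, hkr]
      rfl
    rw [mul_div_assoc, hB,
      key _ (Ideal.absNorm 𝔫) (hdN 𝔫 h𝔫) (Nat.cast_ne_zero.mpr (hNne 𝔫 h𝔫)) _ (hcountR 𝔫 h𝔫)]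
  rw [hL, Finset.sum_congr rfl hR, hmain, Finset.sum_div]
  refine Finset.sum_congr rfl fun 𝔫 h𝔫 => ?_
  rw [mul_div_assoc]

end
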